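/- Let n ≥ 1 and β > 0, and set k(y,z,t) = t^β ∂_t^β P_t(y−z) for y,z ∈ ℝⁿ and t > 0, where ∂_t^β acts in the variable t. Then there exists C > 0 such that |k(y,z,t) − k(y,z′,t)| ≤ C t^β |z−z′| / (t + |y−z|)^{n+β+1} whenever t > 0 and y, z, z′ ∈ ℝⁿ satisfy |y−z| + t > 2|z−z′|. -/

import Mathlib

open MeasureTheory Real Set

/-- For `β > 0`, the unique `m ∈ ℕ` with `m - 1 ≤ β < m`. -/
noncomputable def fracOrder (β : ℝ) : ℕ := ⌊β⌋.toNat + 1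

/-- The `β`-th fractional derivative in `t` (à la Segovia–Wheeden):
`∂_t^β F(t) = (e^{−iπ(m−β)}/Γ(m−β)) ∫₀^∞ ∂_t^m F(t+s) s^{m−β−1} ds` with `m - 1 ≤ β < m`. -/
noncomputable def fracDeriv (β : ℝ) (F : ℝ → ℂ) (t : ℝ) : ℂ :=
  (Complex.exp (-(Complex.I * (Real.pi : ℂ) * ((fracOrder β : ℂ) - (β : ℂ)))) /
      Complex.Gamma ((fracOrder β : ℂ) - (β : ℂ))) *
    ∫ s in Set.Ioi (0 : ℝ), iteratedDeriv (fracOrder β) F (t + s) *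
      ((s ^ ((fracOrder β : ℝ) - β - 1) : ℝ) : ℂ)

/-- The classical Poisson kernel `P_t(z) = c_n t/(|z|² + t²)^((n+1)/2)`,
`c_n = Γ((n+1)/2)/π^((n+1)/2)`. -/
noncomputable def poissonKernelEucl (n : ℕ) (t : ℝ) (z : EuclideanSpace ℝ (Fin n)) : ℝ :=
  (Real.Gamma ((n + 1 : ℝ) / 2) / Real.pi ^ ((n + 1 : ℝ) / 2)) *
    (t / (‖z‖ ^ 2 + t ^ 2) ^ ((n + 1 : ℝ) / 2))

/-- The kernel `k(y,z,t) = t^β ∂_t^β P_t(y − z)`. -/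
noncomputable def kker (n : ℕ) (β : ℝ) (y z : EuclideanSpace ℝ (Fin n)) (t : ℝ) : ℂ :=
  ((t ^ β : ℝ) : ℂ) * fracDeriv β (fun τ => (poissonKernelEucl n τ (y - z) : ℂ)) t

noncomputable section
namespace S3

def U : Set (ℝ × ℝ) := {0}ᶜ

lemma isOpen_U : IsOpen U := isOpen_compl_singleton

lemma mem_U_iff {p : ℝ × ℝ} : p ∈ U ↔ p ≠ 0 := Iff.rfl

lemma mem_U_of_pos {ρ τ : ℝ} (hτ : 0 < τ) : ((ρ, τ) : ℝ × ℝ) ∈ U := by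
  simp only [mem_U_iff, ne_eq, Prod.mk.injEq, Prod.ext_iff]
  rintro ⟨-, h⟩
  simp at h
  exact hτ.ne' h

def g (n : ℕ) (p : ℝ × ℝ) : ℝ :=
  (Real.Gamma ((n + 1 : ℝ) / 2) / Real.pi ^ ((n + 1 : ℝ) / 2)) *
    (p.2 / (p.1 ^ 2 + p.2 ^ 2) ^ ((n + 1 : ℝ) / 2))

lemma sq_add_sq_pos {p : ℝ × ℝ} (hp : p ∈ U) : 0 < p.1 ^ 2 + p.2 ^ 2 := by
  rcases (by positivity : (0:ℝ) ≤ p.1 ^ 2 + p.2 ^ 2).lt_or_eq with h | h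
  · exact h
  · exfalso
    have h1 : p.1 = 0 ∧ p.2 = 0 := by
      constructor <;> nlinarith [sq_nonneg p.1, sq_nonneg p.2]
    exact hp (Prod.ext h1.1 h1.2)

lemma contDiffOn_g (n : ℕ) : ContDiffOn ℝ (⊤ : ℕ∞) (g n) U := by
  intro p hp
  apply ContDiffAt.contDiffWithinAt
  exact ContDiffAt.mul contDiffAt_const (ContDiffAt.div contDiffAt_snd
    (((contDiffAt_fst.pow 2).add (contDiffAt_snd.pow 2)).rpow_const_of_ne
      (sq_add_sq_pos hp).ne')
    (Real.rpow_pos_of_pos (sq_add_sq_pos hp) _).ne')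

def G (n : ℕ) : ℕ → (ℝ × ℝ) → ℝ
  | 0 => g n
  | (m+1) => fun p => fderiv ℝ (G n m) p (0, 1)

def H (n m : ℕ) (p : ℝ × ℝ) : ℝ := fderiv ℝ (G n m) p (1, 0)

lemma contDiffOn_G (n : ℕ) : ∀ m, ContDiffOn ℝ (⊤ : ℕ∞) (G n m) U := by
  intro m
  induction m with
  | zero => exact contDiffOn_g n
  | succ m ih =>
      exact (ih.fderiv_of_isOpen isOpen_U (by exact_mod_cast le_top)).clm_apply contDiffOn_const

lemma continuousOn_H (n m : ℕ) : ContinuousOn (H n m) U := by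
  have h := (contDiffOn_G n m).continuousOn_fderiv_of_isOpen isOpen_U (by exact_mod_cast le_top)
  exact (h.clm_apply continuousOn_const)

lemma continuousOn_G (n m : ℕ) : ContinuousOn (G n m) U :=
  (contDiffOn_G n m).continuousOn

lemma differentiableAt_G {n m : ℕ} {p : ℝ × ℝ} (hp : p ∈ U) :
    DifferentiableAt ℝ (G n m) p :=
  ((contDiffOn_G n m).differentiableOn (by simp)).differentiableAt
    (isOpen_U.mem_nhds hp)

lemma hasDerivAt_G_tau (n m : ℕ) {ρ τ : ℝ} (hp : ((ρ, τ) : ℝ × ℝ) ∈ U) :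
    HasDerivAt (fun τ' => G n m (ρ, τ')) (G n (m+1) (ρ, τ)) τ := by
  have hc : HasDerivAt (fun τ' : ℝ => ((ρ, τ') : ℝ × ℝ)) ((0 : ℝ), (1 : ℝ)) τ :=
    (hasDerivAt_const τ ρ).prodMk (hasDerivAt_id τ)
  have := (differentiableAt_G (n := n) (m := m) hp).hasFDerivAt.comp_hasDerivAt τ hc
  exact this

lemma hasDerivAt_G_rho (n m : ℕ) {ρ τ : ℝ} (hp : ((ρ, τ) : ℝ × ℝ) ∈ U) :
    HasDerivAt (fun ρ' => G n m (ρ', τ)) (H n m (ρ, τ)) ρ := by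
  have hc : HasDerivAt (fun ρ' : ℝ => ((ρ', τ) : ℝ × ℝ)) ((1 : ℝ), (0 : ℝ)) ρ :=
    (hasDerivAt_id ρ).prodMk (hasDerivAt_const ρ τ)
  exact (differentiableAt_G (n := n) (m := m) hp).hasFDerivAt.comp_hasDerivAt ρ hc

lemma smul_mem_U {l : ℝ} (hl : 0 < l) {p : ℝ × ℝ} (hp : p ∈ U) : l • p ∈ U :=
  smul_ne_zero hl.ne' hp

lemma g_hom (n : ℕ) {l : ℝ} (hl : 0 < l) {p : ℝ × ℝ} (hp : p ∈ U) :
    g n (l • p) = l ^ (-(n:ℝ)) * g n p := by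
  have hD := sq_add_sq_pos hp
  have h1 : (l • p).1 = l * p.1 := rfl
  have h2 : (l • p).2 = l * p.2 := rfl
  simp only [g, h1, h2]
  have hE : (l * p.1) ^ 2 + (l * p.2) ^ 2 = l ^ 2 * (p.1 ^ 2 + p.2 ^ 2) := by ring
  rw [hE, Real.mul_rpow (by positivity) hD.le]
  have h3 : (l ^ 2 : ℝ) ^ ((n + 1 : ℝ) / 2) = l ^ ((n:ℝ) + 1) := by
    rw [← Real.rpow_natCast l 2, ← Real.rpow_mul hl.le]
    congr 1
    push_cast
    ring
  rw [h3, Real.rpow_add hl, Real.rpow_one, Real.rpow_neg hl.le, Real.rpow_natCast]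
  have h4 : (0:ℝ) < (p.1 ^ 2 + p.2 ^ 2) ^ ((n + 1 : ℝ) / 2) := Real.rpow_pos_of_pos hD _
  have h5 : (0:ℝ) < l ^ n := pow_pos hl n
  field_simp

lemma eta_mem {p : ℝ × ℝ} (hp : p ∈ U) : ((p.1, p.2) : ℝ × ℝ) ∈ U := by
  simpa using hp

lemma G_hom (n : ℕ) : ∀ m : ℕ, ∀ {l : ℝ}, 0 < l → ∀ {p : ℝ × ℝ}, p ∈ U →
    G n m (l • p) = l ^ (-(n:ℝ) - m) * G n m p := by
  intro m
  induction m with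
  | zero =>
      intro l hl p hp
      simpa [G] using g_hom n hl hp
  | succ m ih =>
      intro l hl p hp
      have hlp : l • p ∈ U := smul_mem_U hl hp
      have hpe : (l • p) = ((l * p.1, l * p.2) : ℝ × ℝ) := rfl
      have key : (fderiv ℝ (G n m) (l • p)) ((0:ℝ), l) = l * G n (m+1) (l • p) := by
        have h0 : ((0:ℝ), l) = l • ((0:ℝ), (1:ℝ)) := by simp
        rw [h0, _root_.map_smul, smul_eq_mul]
        rfl
      have h1 : HasDerivAt (fun τ' => G n m (l * p.1, l * τ'))
          (l * G n (m+1) (l • p)) p.2 := by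
        rw [← key]
        have hcurve : HasDerivAt (fun τ' : ℝ => ((l * p.1, l * τ') : ℝ × ℝ)) ((0:ℝ), l) p.2 := by
          simpa using (hasDerivAt_const p.2 (l * p.1)).prodMk ((hasDerivAt_id p.2).const_mul l)
        have := (differentiableAt_G (n := n) (m := m) hlp).hasFDerivAt.comp_hasDerivAt p.2
          (by rw [hpe] at *; exact hcurve)
        exact this
      have h2' : HasDerivAt (fun τ' => l ^ (-(n:ℝ) - m) * G n m (p.1, τ'))
          (l ^ (-(n:ℝ) - m) * G n (m+1) (p.1, p.2)) p.2 :=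
        (hasDerivAt_G_tau n m (eta_mem hp)).const_mul _
      have hev : (fun τ' => G n m (l * p.1, l * τ'))
          =ᶠ[nhds p.2] (fun τ' => l ^ (-(n:ℝ) - m) * G n m (p.1, τ')) := by
        have hopen : IsOpen {τ' : ℝ | ((p.1, τ') : ℝ × ℝ) ∈ U} :=
          isOpen_U.preimage (by continuity)
        filter_upwards [hopen.mem_nhds (eta_mem hp)] with τ' hτ'
        have := ih hl (p := (p.1, τ')) hτ'
        simpa [Prod.smul_def, smul_eq_mul] using this
      have h2 : HasDerivAt (fun τ' => G n m (l * p.1, l * τ'))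
          (l ^ (-(n:ℝ) - m) * G n (m+1) (p.1, p.2)) p.2 :=
        h2'.congr_of_eventuallyEq hev
      have hu : l * G n (m+1) (l • p) = l ^ (-(n:ℝ) - m) * G n (m+1) p := by
        have := h1.unique h2
        simpa using this
      have harith : l ^ (-(n:ℝ) - ((m:ℝ) + 1)) = l ^ (-(n:ℝ) - m) / l := by
        rw [show -(n:ℝ) - ((m:ℝ)+1) = (-(n:ℝ) - m) - 1 by ring, Real.rpow_sub hl,
          Real.rpow_one]
      have : G n (m+1) (l • p) = l⁻¹ * (l ^ (-(n:ℝ) - m) * G n (m+1) p) := by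
        rw [← hu]; field_simp
      rw [this]
      push_cast
      rw [harith]
      field_simp

lemma H_hom (n : ℕ) (m : ℕ) {l : ℝ} (hl : 0 < l) {p : ℝ × ℝ} (hp : p ∈ U) :
    H n m (l • p) = l ^ (-(n:ℝ) - m - 1) * H n m p := by
  have hlp : l • p ∈ U := smul_mem_U hl hp
  have hpe : (l • p) = ((l * p.1, l * p.2) : ℝ × ℝ) := rfl
  have key : (fderiv ℝ (G n m) (l • p)) (l, (0:ℝ)) = l * H n m (l • p) := by
    have h0 : (l, (0:ℝ)) = l • ((1:ℝ), (0:ℝ)) := by simp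
    rw [h0, _root_.map_smul, smul_eq_mul]
    rfl
  have h1 : HasDerivAt (fun ρ' => G n m (l * ρ', l * p.2))
      (l * H n m (l • p)) p.1 := by
    rw [← key]
    have hcurve : HasDerivAt (fun ρ' : ℝ => ((l * ρ', l * p.2) : ℝ × ℝ)) (l, (0:ℝ)) p.1 := by
      simpa using ((hasDerivAt_id p.1).const_mul l).prodMk (hasDerivAt_const p.1 (l * p.2))
    have := (differentiableAt_G (n := n) (m := m) hlp).hasFDerivAt.comp_hasDerivAt p.1
      (by rw [hpe] at *; exact hcurve)
    exact this
  have h2' : HasDerivAt (fun ρ' => l ^ (-(n:ℝ) - m) * G n m (ρ', p.2))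
      (l ^ (-(n:ℝ) - m) * H n m (p.1, p.2)) p.1 :=
    (hasDerivAt_G_rho n m (eta_mem hp)).const_mul _
  have hev : (fun ρ' => G n m (l * ρ', l * p.2))
      =ᶠ[nhds p.1] (fun ρ' => l ^ (-(n:ℝ) - m) * G n m (ρ', p.2)) := by
    have hopen : IsOpen {ρ' : ℝ | ((ρ', p.2) : ℝ × ℝ) ∈ U} :=
      isOpen_U.preimage (by continuity)
    filter_upwards [hopen.mem_nhds (eta_mem hp)] with ρ' hρ'
    have := G_hom n m hl (p := (ρ', p.2)) hρ'
    simpa [Prod.smul_def, smul_eq_mul] using this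
  have h2 : HasDerivAt (fun ρ' => G n m (l * ρ', l * p.2))
      (l ^ (-(n:ℝ) - m) * H n m (p.1, p.2)) p.1 :=
    h2'.congr_of_eventuallyEq hev
  have hu : l * H n m (l • p) = l ^ (-(n:ℝ) - m) * H n m p := by
    have := h1.unique h2
    simpa using this
  have harith : l ^ (-(n:ℝ) - (m:ℝ) - 1) = l ^ (-(n:ℝ) - m) / l := by
    rw [show -(n:ℝ) - (m:ℝ) - 1 = (-(n:ℝ) - m) - 1 by ring, Real.rpow_sub hl, Real.rpow_one]
  have : H n m (l • p) = l⁻¹ * (l ^ (-(n:ℝ) - m) * H n m p) := by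
    rw [← hu]; field_simp
  rw [this, harith]
  field_simp
lemma bound_of_hom (F : (ℝ × ℝ) → ℝ) (hF : ContinuousOn F U) (e : ℝ) (he : e ≤ 0)
    (hom : ∀ {l : ℝ}, 0 < l → ∀ {p : ℝ × ℝ}, p ∈ U → F (l • p) = l ^ e * F p) :
    ∃ C > 0, ∀ ρ τ : ℝ, 0 ≤ ρ → 0 < τ → |F (ρ, τ)| ≤ C * (ρ + τ) ^ e := by
  have hsub : Metric.sphere (0 : ℝ × ℝ) 1 ⊆ U := by
    intro p hp
    simp only [mem_sphere_iff_norm, sub_zero] at hp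
    simp only [mem_U_iff, ne_eq]
    intro h
    rw [h] at hp
    simp at hp
  obtain ⟨C, hC⟩ := (isCompact_sphere (0 : ℝ × ℝ) 1).exists_bound_of_continuousOn (hF.mono hsub)
  refine ⟨(max C 1) * 2 ^ (-e), by positivity, ?_⟩
  intro ρ τ hρ hτ
  set p : ℝ × ℝ := (ρ, τ) with hpdef
  have hp : p ∈ U := mem_U_of_pos hτ
  have hL : 0 < ‖p‖ := norm_pos_iff.2 hp
  have hu : ‖p‖⁻¹ • p ∈ Metric.sphere (0 : ℝ × ℝ) 1 := by
    simp [norm_smul, abs_of_pos (inv_pos.2 hL), inv_mul_cancel₀ hL.ne']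
  have hup : (‖p‖⁻¹ • p) ∈ U := hsub hu
  have hFp : F p = ‖p‖ ^ e * F (‖p‖⁻¹ • p) := by
    have := hom hL hup
    rwa [smul_inv_smul₀ hL.ne'] at this
  have h1 : |F p| ≤ ‖p‖ ^ e * max C 1 := by
    rw [hFp, abs_mul, abs_of_pos (Real.rpow_pos_of_pos hL e)]
    have := hC _ hu
    have h2 : |F (‖p‖⁻¹ • p)| ≤ max C 1 := le_trans (by simpa using this) (le_max_left _ _)
    exact mul_le_mul_of_nonneg_left h2 (Real.rpow_pos_of_pos hL e).le
  have hhalf : (0:ℝ) < (ρ + τ)/2 := by linarith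
  have h2 : (ρ + τ)/2 ≤ ‖p‖ := by
    have hn : ‖p‖ = max |ρ| |τ| := rfl
    have l1 : ρ ≤ max |ρ| |τ| := (le_abs_self ρ).trans (le_max_left _ _)
    have l2 : τ ≤ max |ρ| |τ| := (le_abs_self τ).trans (le_max_right _ _)
    rw [hn]
    linarith
  have h3 : ‖p‖ ^ e ≤ ((ρ + τ)/2) ^ e := Real.rpow_le_rpow_of_nonpos hhalf h2 he
  have h4 : ((ρ + τ)/2) ^ e = (ρ + τ) ^ e * 2 ^ (-e) := by
    rw [Real.div_rpow (by linarith) (by norm_num), Real.rpow_neg (by norm_num), div_eq_mul_inv]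
  calc |F (ρ, τ)| ≤ ‖p‖ ^ e * max C 1 := h1
    _ ≤ ((ρ + τ)/2) ^ e * max C 1 :=
        mul_le_mul_of_nonneg_right h3 (le_trans zero_le_one (le_max_right C 1))
    _ = max C 1 * 2 ^ (-e) * (ρ + τ) ^ e := by rw [h4]; ring


lemma G_bound (n m : ℕ) : ∃ C > 0, ∀ ρ τ : ℝ, 0 ≤ ρ → 0 < τ →
    |G n m (ρ, τ)| ≤ C * (ρ + τ) ^ (-(n:ℝ) - m) :=
  bound_of_hom (G n m) (continuousOn_G n m) _
    (by have : (0:ℝ) ≤ (n:ℝ) + m := by positivity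
        linarith)
    (fun {l} hl {p} hp => G_hom n m hl hp)

lemma H_bound (n m : ℕ) : ∃ C > 0, ∀ ρ τ : ℝ, 0 ≤ ρ → 0 < τ →
    |H n m (ρ, τ)| ≤ C * (ρ + τ) ^ (-(n:ℝ) - m - 1) :=
  bound_of_hom (H n m) (continuousOn_H n m) _
    (by have : (0:ℝ) ≤ (n:ℝ) + m := by positivity
        linarith)
    (fun {l} hl {p} hp => H_hom n m hl hp)

lemma deriv_ofReal_comp (f : ℝ → ℝ) (x : ℝ) :
    deriv (fun y => ((f y : ℝ) : ℂ)) x = ((deriv f x : ℝ) : ℂ) := by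
  by_cases h : DifferentiableAt ℝ f x
  · exact (h.hasDerivAt.ofReal_comp).deriv
  · rw [deriv_zero_of_not_differentiableAt h, deriv_zero_of_not_differentiableAt]
    · simp
    · intro hd
      apply h
      have he : f = fun y => Complex.reCLM ((fun y => ((f y : ℝ) : ℂ)) y) := by
        ext y; simp
      rw [he]
      exact Complex.reCLM.differentiableAt.comp x hd

lemma iteratedDeriv_ofReal (f : ℝ → ℝ) : ∀ (m : ℕ) (x : ℝ),
    iteratedDeriv m (fun y => ((f y : ℝ) : ℂ)) x = ((iteratedDeriv m f x : ℝ) : ℂ) := by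
  intro m
  induction m with
  | zero => intro x; simp
  | succ m ih =>
      intro x
      rw [iteratedDeriv_succ, iteratedDeriv_succ]
      have he : iteratedDeriv m (fun y => ((f y : ℝ) : ℂ))
          = fun y => ((iteratedDeriv m f y : ℝ) : ℂ) := funext ih
      rw [he, deriv_ofReal_comp]

lemma iteratedDeriv_slice (n : ℕ) (ρ : ℝ) : ∀ (m : ℕ) (τ : ℝ), ((ρ, τ) : ℝ × ℝ) ∈ U →
    iteratedDeriv m (fun τ' => g n (ρ, τ')) τ = G n m (ρ, τ) := by
  intro m
  induction m with
  | zero => intro τ _; simp [G]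
  | succ m ih =>
      intro τ hτ
      rw [iteratedDeriv_succ]
      have hopen : IsOpen {τ' : ℝ | ((ρ, τ') : ℝ × ℝ) ∈ U} :=
        isOpen_U.preimage (by continuity)
      have hev : iteratedDeriv m (fun τ' => g n (ρ, τ'))
          =ᶠ[nhds τ] fun τ' => G n m (ρ, τ') := by
        filter_upwards [hopen.mem_nhds hτ] with τ' hτ'
        exact ih τ' hτ'
      rw [hev.deriv_eq]
      exact (hasDerivAt_G_tau n m hτ).deriv

lemma key_cont {γ M c : ℝ} (hγ0 : 0 < γ) (hc : 0 < c) :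
    ContinuousOn (fun s : ℝ => (s + c) ^ (-M) * s ^ (γ - 1)) (Ioi 0) := by
  intro s hs
  have hs0 : (0:ℝ) < s := hs
  exact ((continuousAt_id.add continuousAt_const).rpow_const
      (Or.inl (by have : (0:ℝ) < s + c := (by linarith); exact this.ne'))).continuousWithinAt.mul
    ((continuousAt_id.rpow_const (Or.inl hs0.ne')).continuousWithinAt)

lemma key_maj1 {γ M c : ℝ} (hγ0 : 0 < γ) (hc : 0 < c) :
    IntegrableOn (fun s : ℝ => c ^ (-M) * s ^ (γ - 1)) (Ioc (0:ℝ) c) :=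
  (intervalIntegrable_iff_integrableOn_Ioc_of_le hc.le).mp
    ((intervalIntegral.intervalIntegrable_rpow' (by linarith)).const_mul (c ^ (-M)))

lemma key_bound1 {γ M c : ℝ} (s : ℝ) (hs : s ∈ Ioc (0:ℝ) c) (hM : 0 ≤ M) :
    (s + c) ^ (-M) * s ^ (γ - 1) ≤ c ^ (-M) * s ^ (γ - 1) := by
  have hs0 : (0:ℝ) < s := hs.1
  have hc : (0:ℝ) < c := lt_of_lt_of_le hs0 hs.2
  exact mul_le_mul_of_nonneg_right
    (Real.rpow_le_rpow_of_nonpos hc (by linarith) (by linarith))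
    (Real.rpow_nonneg hs0.le _)

lemma key_piece1 {γ M c : ℝ} (hγ0 : 0 < γ) (hM : 0 ≤ M) (hc : 0 < c) :
    IntegrableOn (fun s : ℝ => (s + c) ^ (-M) * s ^ (γ - 1)) (Ioc (0:ℝ) c) := by
  refine (key_maj1 hγ0 hc (M := M)).mono'
    (((key_cont hγ0 hc (M := M)).mono Ioc_subset_Ioi_self).aestronglyMeasurable
      measurableSet_Ioc) ?_
  refine (ae_restrict_iff' measurableSet_Ioc).2 (Filter.Eventually.of_forall fun s hs => ?_)
  have hs0 : (0:ℝ) < s := hs.1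
  rw [Real.norm_eq_abs, abs_of_nonneg (by positivity)]
  exact key_bound1 s hs hM

lemma key_maj2 {γ M c : ℝ} (hγ1 : γ ≤ 1) (hM : 2 ≤ M) (hc : 0 < c) :
    IntegrableOn (fun s : ℝ => s ^ (γ - 1 - M)) (Ioi c) :=
  integrableOn_Ioi_rpow_of_lt (by linarith) hc

lemma key_bound2 {γ M c : ℝ} (s : ℝ) (hs : s ∈ Ioi c) (hM : 0 ≤ M) (hc : 0 < c) :
    (s + c) ^ (-M) * s ^ (γ - 1) ≤ s ^ (γ - 1 - M) := by
  have hs0 : (0:ℝ) < s := hc.trans hs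
  have h1 : (s + c) ^ (-M) ≤ s ^ (-M) :=
    Real.rpow_le_rpow_of_nonpos hs0 (by linarith) (by linarith)
  calc (s + c) ^ (-M) * s ^ (γ - 1) ≤ s ^ (-M) * s ^ (γ - 1) :=
        mul_le_mul_of_nonneg_right h1 (Real.rpow_nonneg hs0.le _)
    _ = s ^ (γ - 1 - M) := by
        rw [← Real.rpow_add hs0]; ring_nf

lemma key_piece2 {γ M c : ℝ} (hγ0 : 0 < γ) (hγ1 : γ ≤ 1) (hM : 2 ≤ M) (hc : 0 < c) :
    IntegrableOn (fun s : ℝ => (s + c) ^ (-M) * s ^ (γ - 1)) (Ioi c) := by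
  refine (key_maj2 hγ1 hM hc).mono'
    (((key_cont hγ0 hc (M := M)).mono (Ioi_subset_Ioi hc.le)).aestronglyMeasurable
      measurableSet_Ioi) ?_
  refine (ae_restrict_iff' measurableSet_Ioi).2 (Filter.Eventually.of_forall fun s hs => ?_)
  have hs0 : (0:ℝ) < s := hc.trans hs
  rw [Real.norm_eq_abs, abs_of_nonneg (by positivity)]
  exact key_bound2 s hs (by linarith) hc

lemma key_integrable {γ M c : ℝ} (hγ0 : 0 < γ) (hγ1 : γ ≤ 1) (hM : 2 ≤ M) (hc : 0 < c) :
    IntegrableOn (fun s => (s + c) ^ (-M) * s ^ (γ - 1)) (Ioi (0:ℝ)) := by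
  rw [← Ioc_union_Ioi_eq_Ioi hc.le]
  exact (key_piece1 hγ0 (by linarith) hc).union (key_piece2 hγ0 hγ1 hM hc)

lemma key_integral_le {γ M c : ℝ} (hγ0 : 0 < γ) (hγ1 : γ ≤ 1) (hM : 2 ≤ M) (hc : 0 < c) :
    ∫ s in Ioi (0:ℝ), (s + c) ^ (-M) * s ^ (γ - 1) ≤ (1/γ + 1/(M - γ)) * c ^ (γ - M) := by
  have hMγ : 0 < M - γ := by linarith
  have hsplit : ∫ s in Ioi (0:ℝ), (s + c) ^ (-M) * s ^ (γ - 1)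
      = (∫ s in Ioc (0:ℝ) c, (s + c) ^ (-M) * s ^ (γ - 1))
        + ∫ s in Ioi c, (s + c) ^ (-M) * s ^ (γ - 1) := by
    rw [← Ioc_union_Ioi_eq_Ioi hc.le]
    exact setIntegral_union (Ioc_disjoint_Ioi le_rfl) measurableSet_Ioi
      (key_piece1 hγ0 (by linarith) hc) (key_piece2 hγ0 hγ1 hM hc)
  have hint1 : ∫ s in Ioc (0:ℝ) c, c ^ (-M) * s ^ (γ - 1) = c ^ (γ - M) / γ := by
    rw [MeasureTheory.integral_const_mul, ← intervalIntegral.integral_of_le hc.le,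
      integral_rpow (Or.inl (by linarith))]
    rw [show γ - 1 + 1 = γ by ring, Real.zero_rpow hγ0.ne', sub_zero, mul_div_assoc',
      ← Real.rpow_add hc, show -M + γ = γ - M by ring]
  have hint2 : ∫ s in Ioi c, (fun s : ℝ => s ^ (γ - 1 - M)) s = c ^ (γ - M) / (M - γ) := by
    rw [integral_Ioi_rpow_of_lt (by linarith) hc]
    rw [show γ - 1 - M + 1 = γ - M by ring]
    field_simp
    rw [neg_div', div_eq_iff (show γ - M ≠ 0 from sub_ne_zero_of_ne (ne_of_lt (by linarith)))]
    ring
  have hle1 : ∫ s in Ioc (0:ℝ) c, (s + c) ^ (-M) * s ^ (γ - 1) ≤ c ^ (γ - M) / γ := by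
    rw [← hint1]
    exact setIntegral_mono_on (key_piece1 hγ0 (by linarith) hc) (key_maj1 hγ0 hc)
      measurableSet_Ioc (fun s hs => key_bound1 s hs (by linarith))
  have hle2 : ∫ s in Ioi c, (s + c) ^ (-M) * s ^ (γ - 1) ≤ c ^ (γ - M) / (M - γ) := by
    rw [← hint2]
    exact setIntegral_mono_on (key_piece2 hγ0 hγ1 hM hc) (key_maj2 hγ1 hM hc)
      measurableSet_Ioi (fun s hs => key_bound2 s hs (by linarith) hc)
  rw [hsplit]
  calc _ ≤ c ^ (γ - M) / γ + c ^ (γ - M) / (M - γ) := add_le_add hle1 hle2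
    _ = (1/γ + 1/(M - γ)) * c ^ (γ - M) := by field_simp

end S3
end

/-- `|k(y,z,t) − k(y,z′,t)| ≤ C t^β |z−z′| / (t + |y−z|)^{n+β+1}`
whenever `|y−z| + t > 2|z−z′|`. -/
theorem statement3 (n : ℕ) (hn : 1 ≤ n) (β : ℝ) (hβ : 0 < β) :
    ∃ C > (0 : ℝ), ∀ (y z z' : EuclideanSpace ℝ (Fin n)) (t : ℝ), 0 < t →
      ‖y - z‖ + t > 2 * ‖z - z'‖ →
      ‖kker n β y z t - kker n β y z' t‖
        ≤ C * t ^ β * ‖z - z'‖ / (t + ‖y - z‖) ^ ((n : ℝ) + β + 1) := by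
  classical
  set m : ℕ := fracOrder β with hm
  set γ : ℝ := (m : ℝ) - β with hγ
  have hm1 : 1 ≤ m := Nat.le_add_left 1 _
  have hmcast : (m : ℝ) = (⌊β⌋ : ℝ) + 1 := by
    have h0 : (⌊β⌋.toNat : ℤ) = ⌊β⌋ := Int.toNat_of_nonneg (Int.floor_nonneg.2 hβ.le)
    have h1 : ((⌊β⌋.toNat : ℕ) : ℝ) = ((⌊β⌋ : ℤ) : ℝ) := by exact_mod_cast h0
    rw [hm]
    unfold fracOrder
    push_cast
    rw [h1]
  have hγ0 : 0 < γ := by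
    rw [hγ, hmcast]
    have := Int.lt_floor_add_one β
    linarith
  have hγ1 : γ ≤ 1 := by
    rw [hγ, hmcast]
    have := Int.floor_le β
    linarith
  have hnm2 : (2:ℝ) ≤ (n:ℝ) + m := by
    have h1 : (1:ℝ) ≤ (n:ℝ) := by exact_mod_cast hn
    have h2 : (1:ℝ) ≤ (m:ℝ) := by exact_mod_cast hm1
    linarith
  obtain ⟨CG, hCG0, hCG⟩ := S3.G_bound n m
  obtain ⟨CH, hCH0, hCH⟩ := S3.H_bound n m
  set cΓ : ℂ := Complex.exp (-(Complex.I * (Real.pi : ℂ) * ((m : ℂ) - (β : ℂ)))) /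
      Complex.Gamma ((m : ℂ) - (β : ℂ)) with hcΓ
  set aΓ : ℝ := ‖cΓ‖ with haΓ
  have haΓ0 : 0 ≤ aΓ := norm_nonneg _
  set Ne : ℝ := (n:ℝ) + m + 1 with hNe
  set E : ℝ := (n:ℝ) + β + 1 with hE
  have hENe : γ - Ne = -E := by rw [hγ, hNe, hE]; ring
  have hNe2 : (2:ℝ) ≤ Ne := by rw [hNe]; linarith
  set Kγ : ℝ := 1/γ + 1/(Ne - γ) with hKγ
  have hKγ0 : 0 < Kγ := by
    rw [hKγ]
    have h1 : 0 < 1/γ := by positivity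
    have h2 : 0 < 1/(Ne - γ) := by
      have : 0 < Ne - γ := by linarith
      positivity
    linarith
  refine ⟨aΓ * CH * Kγ * 2 ^ E + 1, by positivity, ?_⟩
  intro y z z' t ht hsep
  set r : ℝ := ‖y - z‖ with hr
  set r' : ℝ := ‖y - z'‖ with hr'
  set d : ℝ := ‖z - z'‖ with hd
  have hr0 : 0 ≤ r := norm_nonneg _
  have hr'0 : 0 ≤ r' := norm_nonneg _
  have hd0 : 0 ≤ d := norm_nonneg _
  have hrr' : |r' - r| ≤ d := by
    rw [hr', hr, hd]
    calc |‖y - z'‖ - ‖y - z‖| ≤ ‖(y - z') - (y - z)‖ := abs_norm_sub_norm_le _ _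
      _ = ‖z - z'‖ := by rw [show (y - z') - (y - z) = z - z' by abel]
  set A : ℝ := t + r with hA
  have hA0 : 0 < A := by rw [hA]; linarith
  set a : ℝ := A / 2 with ha
  have ha0 : 0 < a := by rw [ha]; linarith
  -- rewrite the kernels
  have hkk : ∀ w : EuclideanSpace ℝ (Fin n),
      fracDeriv β (fun τ => ((poissonKernelEucl n τ w : ℝ) : ℂ)) t
        = cΓ * ∫ s in Ioi (0:ℝ), ((S3.G n m (‖w‖, t + s) : ℝ) : ℂ) * ((s ^ (γ - 1) : ℝ) : ℂ) := by
    intro w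
    unfold fracDeriv
    rw [← hm, ← hcΓ]
    congr 1
    refine setIntegral_congr_fun measurableSet_Ioi (fun s hs => ?_)
    have hts : (0:ℝ) < t + s := by have : (0:ℝ) < s := hs; linarith
    have hfun : (fun τ => ((poissonKernelEucl n τ w : ℝ) : ℂ))
        = fun τ => ((S3.g n (‖w‖, τ) : ℝ) : ℂ) := rfl
    rw [hfun, S3.iteratedDeriv_ofReal, S3.iteratedDeriv_slice n ‖w‖ m (t + s)
      (S3.mem_U_of_pos hts)]
  set f1 : ℝ → ℂ := fun s => ((S3.G n m (r, t + s) : ℝ) : ℂ) * ((s ^ (γ - 1) : ℝ) : ℂ) with hf1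
  set f2 : ℝ → ℂ := fun s => ((S3.G n m (r', t + s) : ℝ) : ℂ) * ((s ^ (γ - 1) : ℝ) : ℂ) with hf2
  have hrpc : ContinuousOn (fun s : ℝ => s ^ (γ - 1)) (Ioi (0:ℝ)) :=
    fun s hs => (continuousAt_id.rpow_const (Or.inl (ne_of_gt hs))).continuousWithinAt
  have hint : ∀ rr : ℝ, 0 ≤ rr → IntegrableOn
      (fun s => ((S3.G n m (rr, t + s) : ℝ) : ℂ) * ((s ^ (γ - 1) : ℝ) : ℂ)) (Ioi (0:ℝ)) := by
    intro rr hrr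
    have hmaj : IntegrableOn (fun s => CG * ((s + t) ^ (-((n:ℝ)+m)) * s ^ (γ - 1)))
        (Ioi (0:ℝ)) := (S3.key_integrable hγ0 hγ1 hnm2 ht).const_mul _
    have hcontG : ContinuousOn (fun s : ℝ => S3.G n m (rr, t + s)) (Ioi 0) := by
      apply (S3.continuousOn_G n m).comp
        ((continuous_const.prodMk (continuous_const.add continuous_id)).continuousOn)
      intro s hs
      have hs0 : (0:ℝ) < s := hs
      simp only [id_eq]
      exact S3.mem_U_of_pos (show (0:ℝ) < t + s by linarith)
    refine hmaj.mono' ?_ ?_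
    · exact ((Complex.continuous_ofReal.comp_continuousOn hcontG).mul
        (Complex.continuous_ofReal.comp_continuousOn hrpc)).aestronglyMeasurable
        measurableSet_Ioi
    · refine (ae_restrict_iff' measurableSet_Ioi).2 (Filter.Eventually.of_forall fun s hs => ?_)
      have hs0 : (0:ℝ) < s := hs
      have hts : (0:ℝ) < t + s := by linarith
      have h1 : ‖(((S3.G n m (rr, t + s) : ℝ) : ℂ) * ((s ^ (γ - 1) : ℝ) : ℂ))‖
          = |S3.G n m (rr, t + s)| * s ^ (γ - 1) := by
        rw [norm_mul, Complex.norm_real, Complex.norm_real, Real.norm_eq_abs, Real.norm_eq_abs,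
          abs_of_nonneg (Real.rpow_nonneg hs0.le _)]
      show ‖_‖ ≤ _
      rw [h1]
      have h2 : |S3.G n m (rr, t + s)| ≤ CG * (rr + (t + s)) ^ (-(n:ℝ) - m) :=
        hCG rr (t + s) hrr hts
      have h3 : (rr + (t + s)) ^ (-(n:ℝ) - m) ≤ (s + t) ^ (-((n:ℝ) + m)) := by
        rw [show -(n:ℝ) - m = -((n:ℝ) + m) by ring]
        exact Real.rpow_le_rpow_of_nonpos (by linarith) (by linarith) (by linarith)
      calc |S3.G n m (rr, t + s)| * s ^ (γ - 1)
          ≤ (CG * (s + t) ^ (-((n:ℝ) + m))) * s ^ (γ - 1) := by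
            apply mul_le_mul_of_nonneg_right _ (Real.rpow_nonneg hs0.le _)
            exact h2.trans (mul_le_mul_of_nonneg_left h3 hCG0.le)
        _ = CG * ((s + t) ^ (-((n:ℝ) + m)) * s ^ (γ - 1)) := by ring
  have hI1 : IntegrableOn f1 (Ioi (0:ℝ)) := hint r hr0
  have hI2 : IntegrableOn f2 (Ioi (0:ℝ)) := hint r' hr'0
  -- pointwise bound on the difference
  have hdiff : ∀ s ∈ Ioi (0:ℝ), ‖f1 s - f2 s‖ ≤ CH * d * ((s + a) ^ (-Ne) * s ^ (γ - 1)) := by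
    intro s hs
    have hs0 : (0:ℝ) < s := hs
    have hts : (0:ℝ) < t + s := by linarith
    have hsa : (0:ℝ) < s + a := by linarith
    have hsub : f1 s - f2 s
        = (((S3.G n m (r, t + s) - S3.G n m (r', t + s) : ℝ)) : ℂ) * ((s ^ (γ - 1) : ℝ) : ℂ) := by
      rw [hf1, hf2]
      push_cast
      ring
    have hmv : |S3.G n m (r, t + s) - S3.G n m (r', t + s)| ≤ (CH * (s + a) ^ (-Ne)) * d := by
      have hder : ∀ ρ ∈ uIcc r' r, HasDerivWithinAt (fun ρ' => S3.G n m (ρ', t + s))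
          (S3.H n m (ρ, t + s)) (uIcc r' r) ρ :=
        fun ρ _ => (S3.hasDerivAt_G_rho n m (S3.mem_U_of_pos hts)).hasDerivWithinAt
      have hbd : ∀ ρ ∈ uIcc r' r, ‖S3.H n m (ρ, t + s)‖ ≤ CH * (s + a) ^ (-Ne) := by
        intro ρ hρ
        have habs := abs_le.mp hrr'
        have hcases := Set.mem_uIcc.mp hρ
        have hρ0 : 0 ≤ ρ := by rcases hcases with ⟨h1, _⟩ | ⟨h1, _⟩ <;> linarith
        have hρd : r - d ≤ ρ := by rcases hcases with ⟨h1, _⟩ | ⟨h1, _⟩ <;> linarith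
        have h1 : s + a ≤ ρ + (t + s) := by
          rw [ha, hA]
          linarith
        have h2 : |S3.H n m (ρ, t + s)| ≤ CH * (ρ + (t + s)) ^ (-(n:ℝ) - m - 1) :=
          hCH ρ (t + s) hρ0 hts
        have h3 : (ρ + (t + s)) ^ (-(n:ℝ) - m - 1) ≤ (s + a) ^ (-Ne) := by
          rw [show -(n:ℝ) - m - 1 = -Ne by rw [hNe]; ring]
          exact Real.rpow_le_rpow_of_nonpos hsa h1 (by rw [hNe]; linarith)
        rw [Real.norm_eq_abs]
        exact h2.trans (mul_le_mul_of_nonneg_left h3 hCH0.le)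
      have := (convex_uIcc r' r).norm_image_sub_le_of_norm_hasDerivWithin_le hder hbd
        left_mem_uIcc right_mem_uIcc
      rw [Real.norm_eq_abs, Real.norm_eq_abs] at this
      calc |S3.G n m (r, t + s) - S3.G n m (r', t + s)| ≤ (CH * (s + a) ^ (-Ne)) * |r - r'| :=
            this
        _ ≤ (CH * (s + a) ^ (-Ne)) * d := by
            apply mul_le_mul_of_nonneg_left _ (by positivity)
            rw [abs_sub_comm]
            exact hrr'
    rw [hsub]
    have hnn : ‖(((S3.G n m (r, t + s) - S3.G n m (r', t + s) : ℝ)) : ℂ)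
        * ((s ^ (γ - 1) : ℝ) : ℂ)‖
        = |S3.G n m (r, t + s) - S3.G n m (r', t + s)| * s ^ (γ - 1) := by
      rw [norm_mul, Complex.norm_real, Complex.norm_real, Real.norm_eq_abs, Real.norm_eq_abs,
        abs_of_nonneg (Real.rpow_nonneg hs0.le _)]
    rw [hnn]
    calc |S3.G n m (r, t + s) - S3.G n m (r', t + s)| * s ^ (γ - 1)
        ≤ ((CH * (s + a) ^ (-Ne)) * d) * s ^ (γ - 1) :=
          mul_le_mul_of_nonneg_right hmv (Real.rpow_nonneg hs0.le _)
      _ = CH * d * ((s + a) ^ (-Ne) * s ^ (γ - 1)) := by ring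
  have hmaj2 : IntegrableOn (fun s => CH * d * ((s + a) ^ (-Ne) * s ^ (γ - 1))) (Ioi (0:ℝ)) :=
    (S3.key_integrable hγ0 hγ1 hNe2 ha0).const_mul _
  have hIdiff : ‖(∫ s in Ioi (0:ℝ), f1 s) - ∫ s in Ioi (0:ℝ), f2 s‖
      ≤ CH * d * (Kγ * a ^ (γ - Ne)) := by
    rw [← integral_sub hI1 hI2]
    calc ‖∫ s in Ioi (0:ℝ), (f1 s - f2 s)‖ = ‖∫ s in Ioi (0:ℝ), (f1 s - f2 s)‖ := rfl
      _ ≤ ∫ s in Ioi (0:ℝ), ‖f1 s - f2 s‖ := norm_integral_le_integral_norm _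
      _ ≤ ∫ s in Ioi (0:ℝ), CH * d * ((s + a) ^ (-Ne) * s ^ (γ - 1)) :=
          setIntegral_mono_on ((hI1.sub hI2).norm) hmaj2 measurableSet_Ioi hdiff
      _ = CH * d * ∫ s in Ioi (0:ℝ), ((s + a) ^ (-Ne) * s ^ (γ - 1)) :=
          MeasureTheory.integral_const_mul _ _
      _ ≤ CH * d * ((1/γ + 1/(Ne - γ)) * a ^ (γ - Ne)) :=
          mul_le_mul_of_nonneg_left (S3.key_integral_le hγ0 hγ1 hNe2 ha0) (by positivity)
      _ = CH * d * (Kγ * a ^ (γ - Ne)) := by rw [hKγ]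
  have hAe : a ^ (γ - Ne) = 2 ^ E * A ^ (-E) := by
    rw [hENe, ha, Real.div_rpow hA0.le (by norm_num : (0:ℝ) ≤ 2),
      Real.rpow_neg (by norm_num : (0:ℝ) ≤ 2), div_eq_mul_inv, inv_inv, mul_comm]
  have hLHS : ‖kker n β y z t - kker n β y z' t‖
      = t ^ β * (aΓ * ‖(∫ s in Ioi (0:ℝ), f1 s) - ∫ s in Ioi (0:ℝ), f2 s‖) := by
    unfold kker
    rw [hkk (y - z), hkk (y - z'), ← hr, ← hr', ← hf1, ← hf2]
    rw [show ((t ^ β : ℝ) : ℂ) * (cΓ * ∫ s in Ioi (0:ℝ), f1 s)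
        - ((t ^ β : ℝ) : ℂ) * (cΓ * ∫ s in Ioi (0:ℝ), f2 s)
        = ((t ^ β : ℝ) : ℂ) * cΓ * ((∫ s in Ioi (0:ℝ), f1 s) - ∫ s in Ioi (0:ℝ), f2 s) by ring]
    rw [norm_mul, norm_mul, Complex.norm_real, Real.norm_eq_abs, abs_of_pos (Real.rpow_pos_of_pos ht β), ← haΓ]
    ring
  rw [hLHS, div_eq_mul_inv]
  have hAneg : A ^ (-E) = (A ^ E)⁻¹ := Real.rpow_neg hA0.le E
  calc t ^ β * (aΓ * ‖(∫ s in Ioi (0:ℝ), f1 s) - ∫ s in Ioi (0:ℝ), f2 s‖)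
      ≤ t ^ β * (aΓ * (CH * d * (Kγ * (2 ^ E * A ^ (-E))))) := by
        rw [← hAe]
        exact mul_le_mul_of_nonneg_left (mul_le_mul_of_nonneg_left hIdiff haΓ0)
          (Real.rpow_pos_of_pos ht β).le
    _ = (aΓ * CH * Kγ * 2 ^ E) * (t ^ β * d * (A ^ E)⁻¹) := by rw [hAneg]; ring
    _ ≤ (aΓ * CH * Kγ * 2 ^ E + 1) * (t ^ β * d * (A ^ E)⁻¹) := by
        apply mul_le_mul_of_nonneg_right (by linarith)
        have h1 : 0 < A ^ E := Real.rpow_pos_of_pos hA0 E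
        positivity
    _ = (aΓ * CH * Kγ * 2 ^ E + 1) * t ^ β * d * (A ^ E)⁻¹ := by ring
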